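/- For s > 0 the expected squared H^{−s} norm of the field h satisfies E(||h||_{−s}²) = π Σ_{k≥1} j_{0,k}^{−2−2s} + 2π Σ_{n,k≥1} (1 + 1/n) j_{n,k}^{−2−2s}, and this quantity is finite. -/
import Mathlib


open MeasureTheory

lemma aux_expected {Ω : Type*} [MeasureSpace Ω] {ι : Type*} [Countable ι]
    (f : ι → Ω → ℝ) (c v : ι → ℝ)
    (hmeas : ∀ i, Measurable (f i)) (hnn : ∀ i ω, 0 ≤ f i ω)
    (hint : ∀ i, ∫ ω, f i ω = v i) (hv : ∀ i, 0 < v i) (hc : ∀ i, 0 ≤ c i)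
    (hsum : Summable (fun i => v i * c i)) :
    (∀ᵐ ω : Ω, ENNReal.ofReal (∑' i, f i ω * c i) = ∑' i, ENNReal.ofReal (f i ω * c i)) ∧
    (∫⁻ ω, ∑' i, ENNReal.ofReal (f i ω * c i)) = ENNReal.ofReal (∑' i, v i * c i) := by
  have hintg : ∀ i, Integrable (f i) := by
    intro i; by_contra h
    exact (hv i).ne' ((hint i).symm.trans (integral_undef h))
  have hl : ∀ i, (∫⁻ ω, ENNReal.ofReal (f i ω * c i)) = ENNReal.ofReal (v i * c i) := by
    intro i
    have h1 : ∀ ω, ENNReal.ofReal (f i ω * c i)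
        = ENNReal.ofReal (f i ω) * ENNReal.ofReal (c i) :=
      fun ω => ENNReal.ofReal_mul (hnn i ω)
    simp_rw [h1]
    rw [lintegral_mul_const _ ((hmeas i).ennreal_ofReal),
      ← ofReal_integral_eq_lintegral_ofReal (hintg i) (Filter.Eventually.of_forall (hnn i)),
      hint i, ENNReal.ofReal_mul (hv i).le]
  have hmeasG : Measurable (fun ω => ∑' i, ENNReal.ofReal (f i ω * c i)) :=
    Measurable.ennreal_tsum fun i => ((hmeas i).mul_const _).ennreal_ofReal
  have hG : (∫⁻ ω, ∑' i, ENNReal.ofReal (f i ω * c i)) = ENNReal.ofReal (∑' i, v i * c i) := by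
    rw [lintegral_tsum (fun i => (((hmeas i).mul_const _).ennreal_ofReal).aemeasurable)]
    simp_rw [hl]
    rw [← ENNReal.ofReal_tsum_of_nonneg (fun i => mul_nonneg (hv i).le (hc i)) hsum]
  refine ⟨?_, hG⟩
  have hfin : ∀ᵐ ω : Ω, (∑' i, ENNReal.ofReal (f i ω * c i)) < ⊤ :=
    ae_lt_top hmeasG (by rw [hG]; exact ENNReal.ofReal_ne_top)
  filter_upwards [hfin] with ω hω
  have hsumm : Summable (fun i => f i ω * c i) := by
    refine (ENNReal.summable_toReal hω.ne).congr fun i => ?_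
    exact ENNReal.toReal_ofReal (mul_nonneg (hnn i ω) (hc i))
  exact ENNReal.ofReal_tsum_of_nonneg (fun i => mul_nonneg (hnn i ω) (hc i)) hsumm

/-- The expected squared `H^{−s}` norm of the field
`h = √π Σ_k (A_k/j_{0,k}) e_{0,k} + 2√π Re Σ_{n,k} (1/j_{n,k})(Z_{n,k} + W_n/√n) e_{n,k}`:
`E(‖h‖_{−s}²) = π Σ_k j_{0,k}^{−2−2s} + 2π Σ_{n,k} (1 + 1/n) j_{n,k}^{−2−2s} < ∞` for `s > 0`. -/
theorem expected_sobolev_norm_field {Ω : Type*} [MeasureSpace Ω]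
    [IsProbabilityMeasure (volume : Measure Ω)]
    (j0 : ℕ+ → ℝ) (j : ℕ+ × ℕ+ → ℝ)
    (hj0pos : ∀ k, 0 < j0 k) (hjpos : ∀ p, 0 < j p)
    (hj0lb : ∀ k : ℕ+, ((k : ℝ) - 1 / 4) ^ 2 * Real.pi ^ 2 < (j0 k) ^ 2)
    (hjlb : ∀ p : ℕ+ × ℕ+,
      ((p.1 : ℝ)) ^ 2 + ((p.2 : ℝ) - 1 / 4) ^ 2 * Real.pi ^ 2 < (j p) ^ 2)
    (A : ℕ+ → Ω → ℝ) (Z : ℕ+ × ℕ+ → Ω → ℂ) (W : ℕ+ → Ω → ℂ)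
    (hAmeas : ∀ k, Measurable (A k)) (hZmeas : ∀ p, Measurable (Z p))
    (hWmeas : ∀ n, Measurable (W n))
    (hA : ∀ k, ∫ ω, (A k ω) ^ 2 = 1)
    (hZW : ∀ p : ℕ+ × ℕ+,
      ∫ ω, ‖Z p ω + W p.1 ω / Real.sqrt ((p.1 : ℕ) : ℝ)‖ ^ 2 = 1 + 1 / ((p.1 : ℕ) : ℝ))
    (s : ℝ) (hs : 0 < s) :
    (∫⁻ ω, ENNReal.ofReal
        (Real.pi * ∑' k : ℕ+, (A k ω) ^ 2 * (j0 k) ^ (-2 - 2 * s) +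
          2 * Real.pi * ∑' p : ℕ+ × ℕ+,
            ‖Z p ω + W p.1 ω / Real.sqrt ((p.1 : ℕ) : ℝ)‖ ^ 2 * (j p) ^ (-2 - 2 * s))
      = ENNReal.ofReal
        (Real.pi * ∑' k : ℕ+, (j0 k) ^ (-2 - 2 * s) +
          2 * Real.pi * ∑' p : ℕ+ × ℕ+, (1 + 1 / ((p.1 : ℕ) : ℝ)) * (j p) ^ (-2 - 2 * s))) ∧
    Summable (fun k : ℕ+ => (j0 k) ^ (-2 - 2 * s)) ∧
    Summable (fun p : ℕ+ × ℕ+ => (1 + 1 / ((p.1 : ℕ) : ℝ)) * (j p) ^ (-2 - 2 * s)) := by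
  -- Summability of the first series
  have hsum0 : Summable (fun k : ℕ+ => (j0 k) ^ (-2 - 2 * s)) := by
    have he1 : (-2 - 2*s : ℝ) < -1 := by linarith
    have hen : (-2 - 2*s : ℝ) ≤ 0 := by linarith
    have hb : Summable (fun k : ℕ+ => ((3/4)*Real.pi)^(-2-2*s) * (((k:ℕ)):ℝ)^(-2-2*s)) :=
      ((Real.summable_nat_rpow.mpr he1).mul_left _).comp_injective
        (fun a b h => PNat.coe_injective h)
    refine Summable.of_nonneg_of_le (fun k => Real.rpow_nonneg (hj0pos k).le _) (fun k => ?_) hb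
    have hk1 : (1:ℝ) ≤ ((k:ℕ):ℝ) := by exact_mod_cast k.one_le
    have hkr : ((k:ℕ):ℝ) = (k:ℝ) := by norm_cast
    have hπ := Real.pi_gt_three
    have hlt : (3/4)*Real.pi * ((k:ℕ):ℝ) < j0 k := by
      refine lt_of_pow_lt_pow_left₀ 2 (hj0pos k).le ?_
      have hq : (0:ℝ) ≤ 7/16*((k:ℕ):ℝ)^2 - ((k:ℕ):ℝ)/2 + 1/16 := by
        nlinarith [mul_nonneg (sub_nonneg.2 hk1) (by linarith : (0:ℝ) ≤ 7*((k:ℕ):ℝ) - 1)]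
      have h2 := hj0lb k
      rw [← hkr] at h2
      nlinarith [mul_nonneg (sq_nonneg Real.pi) hq]
    calc (j0 k)^(-2-2*s) ≤ ((3/4)*Real.pi*((k:ℕ):ℝ))^(-2-2*s) :=
          Real.rpow_le_rpow_of_nonpos (by positivity) hlt.le hen
      _ = ((3/4)*Real.pi)^(-2-2*s) * (((k:ℕ)):ℝ)^(-2-2*s) :=
          Real.mul_rpow (by positivity) (by positivity)
  -- Summability of the second series
  have hsum2 : Summable (fun p : ℕ+ × ℕ+ => (1 + 1 / ((p.1 : ℕ) : ℝ)) * (j p) ^ (-2 - 2 * s)) := by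
    have he2 : (-1 - s : ℝ) < -1 := by linarith
    have hb0 : Summable (fun n : ℕ => ((n:ℝ))^(-1-s)) := Real.summable_nat_rpow.mpr he2
    have hb : Summable (fun p : ℕ+ × ℕ+ =>
        2 * ((((p.1:ℕ)):ℝ)^(-1-s) * (((p.2:ℕ)):ℝ)^(-1-s))) := by
      have := ((hb0.mul_of_nonneg hb0 (fun n => Real.rpow_nonneg n.cast_nonneg _)
        (fun n => Real.rpow_nonneg n.cast_nonneg _)).mul_left 2).comp_injective
        (Function.Injective.prodMap PNat.coe_injective PNat.coe_injective)
      exact this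
    refine Summable.of_nonneg_of_le (fun p => ?_) (fun p => ?_) hb
    · have h0 : (0:ℝ) < ((p.1:ℕ):ℝ) := by exact_mod_cast p.1.pos
      exact mul_nonneg (by positivity) (Real.rpow_nonneg (hjpos p).le _)
    · have hn1 : (1:ℝ) ≤ ((p.1:ℕ):ℝ) := by exact_mod_cast p.1.one_le
      have hk1 : (1:ℝ) ≤ ((p.2:ℕ):ℝ) := by exact_mod_cast p.2.one_le
      have hπ := Real.pi_gt_three
      have h1 : (1 + 1 / ((p.1:ℕ):ℝ)) ≤ 2 := by
        have : 1 / ((p.1:ℕ):ℝ) ≤ 1 := by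
          rw [div_le_one (by linarith)]; exact hn1
        linarith
      have hnr : ((p.1:ℕ):ℝ) = (p.1:ℝ) := by norm_cast
      have hkr : ((p.2:ℕ):ℝ) = (p.2:ℝ) := by norm_cast
      have hnk : ((p.1:ℕ):ℝ) * ((p.2:ℕ):ℝ) ≤ (j p)^2 := by
        have h5 : ((p.2:ℕ):ℝ) ≤ 2*(((p.2:ℕ):ℝ)-1/4)*Real.pi := by nlinarith
        have h6 : ((p.1:ℕ):ℝ)*((p.2:ℕ):ℝ) ≤ 2*((p.1:ℕ):ℝ)*(((p.2:ℕ):ℝ)-1/4)*Real.pi := by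
          nlinarith [mul_le_mul_of_nonneg_left h5 (le_trans zero_le_one hn1)]
        have h7 := hjlb p
        rw [← hnr, ← hkr] at h7
        nlinarith [sq_nonneg (((p.1:ℕ):ℝ) - (((p.2:ℕ):ℝ)-1/4)*Real.pi)]
      have hje : (j p)^(-2-2*s) = ((j p)^2)^(-1-s) := by
        rw [← Real.rpow_natCast (j p) 2, ← Real.rpow_mul (hjpos p).le]
        norm_num; ring_nf
      have h2 : (j p)^(-2-2*s) ≤ ((p.1:ℕ):ℝ)^(-1-s) * ((p.2:ℕ):ℝ)^(-1-s) := by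
        rw [hje, ← Real.mul_rpow (by linarith) (by linarith)]
        exact Real.rpow_le_rpow_of_nonpos (by nlinarith) hnk (by linarith)
      have hj0' : 0 ≤ (j p)^(-2-2*s) := Real.rpow_nonneg (hjpos p).le _
      calc (1 + 1 / ((p.1:ℕ):ℝ)) * (j p)^(-2-2*s) ≤ 2 * ((j p)^(-2-2*s)) :=
            mul_le_mul_of_nonneg_right h1 hj0'
        _ ≤ 2 * (((p.1:ℕ):ℝ)^(-1-s) * ((p.2:ℕ):ℝ)^(-1-s)) := by linarith
  refine ⟨?_, hsum0, hsum2⟩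
  -- nonnegativity of coefficients
  have hc0 : ∀ k : ℕ+, 0 ≤ (j0 k) ^ (-2 - 2*s) := fun k => Real.rpow_nonneg (hj0pos k).le _
  have hc : ∀ p : ℕ+ × ℕ+, 0 ≤ (j p) ^ (-2 - 2*s) := fun p => Real.rpow_nonneg (hjpos p).le _
  -- apply the auxiliary lemma to both families
  have hsum0' : Summable (fun k : ℕ+ => (1:ℝ) * (j0 k) ^ (-2 - 2 * s)) := by
    simpa using hsum0
  obtain ⟨ae1, int1⟩ :
      (∀ᵐ ω : Ω, ENNReal.ofReal (∑' k : ℕ+, (A k ω) ^ 2 * (j0 k) ^ (-2 - 2 * s))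
        = ∑' k : ℕ+, ENNReal.ofReal ((A k ω) ^ 2 * (j0 k) ^ (-2 - 2 * s))) ∧
      (∫⁻ ω, ∑' k : ℕ+, ENNReal.ofReal ((A k ω) ^ 2 * (j0 k) ^ (-2 - 2 * s)))
        = ENNReal.ofReal (∑' k : ℕ+, (1:ℝ) * (j0 k) ^ (-2 - 2 * s)) :=
    aux_expected (fun k ω => (A k ω) ^ 2) (fun k => (j0 k) ^ (-2 - 2 * s)) (fun _ => 1)
      (fun k => (hAmeas k).pow_const 2) (fun k ω => sq_nonneg _) hA (fun _ => one_pos)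
      hc0 hsum0'
  have hBmeas : ∀ p : ℕ+ × ℕ+,
      Measurable (fun ω => ‖Z p ω + W p.1 ω / Real.sqrt ((p.1 : ℕ) : ℝ)‖ ^ 2) :=
    fun p => (((hZmeas p).add ((hWmeas p.1).div_const _)).norm).pow_const 2
  have hvpos : ∀ p : ℕ+ × ℕ+, (0:ℝ) < 1 + 1 / ((p.1 : ℕ) : ℝ) := by
    intro p
    have h0 : (0:ℝ) < ((p.1:ℕ):ℝ) := by exact_mod_cast p.1.pos
    positivity
  obtain ⟨ae2, int2⟩ :
      (∀ᵐ ω : Ω, ENNReal.ofReal (∑' p : ℕ+ × ℕ+,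
          ‖Z p ω + W p.1 ω / Real.sqrt ((p.1 : ℕ) : ℝ)‖ ^ 2 * (j p) ^ (-2 - 2 * s))
        = ∑' p : ℕ+ × ℕ+, ENNReal.ofReal
          (‖Z p ω + W p.1 ω / Real.sqrt ((p.1 : ℕ) : ℝ)‖ ^ 2 * (j p) ^ (-2 - 2 * s))) ∧
      (∫⁻ ω, ∑' p : ℕ+ × ℕ+, ENNReal.ofReal
          (‖Z p ω + W p.1 ω / Real.sqrt ((p.1 : ℕ) : ℝ)‖ ^ 2 * (j p) ^ (-2 - 2 * s)))
        = ENNReal.ofReal (∑' p : ℕ+ × ℕ+, (1 + 1 / ((p.1 : ℕ) : ℝ)) * (j p) ^ (-2 - 2 * s)) :=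
    aux_expected (fun p ω => ‖Z p ω + W p.1 ω / Real.sqrt ((p.1 : ℕ) : ℝ)‖ ^ 2)
      (fun p => (j p) ^ (-2 - 2 * s)) (fun p => 1 + 1 / ((p.1 : ℕ) : ℝ))
      hBmeas (fun p ω => sq_nonneg _) hZW hvpos hc hsum2
  -- measurability of the two ENNReal-valued sums
  have hG1meas : Measurable (fun ω =>
      ∑' k : ℕ+, ENNReal.ofReal ((A k ω) ^ 2 * (j0 k) ^ (-2 - 2 * s))) :=
    Measurable.ennreal_tsum fun k => (((hAmeas k).pow_const 2).mul_const _).ennreal_ofReal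
  have hG2meas : Measurable (fun ω => ∑' p : ℕ+ × ℕ+, ENNReal.ofReal
      (‖Z p ω + W p.1 ω / Real.sqrt ((p.1 : ℕ) : ℝ)‖ ^ 2 * (j p) ^ (-2 - 2 * s))) :=
    Measurable.ennreal_tsum fun p => ((hBmeas p).mul_const _).ennreal_ofReal
  have hπ0 : (0:ℝ) ≤ Real.pi := Real.pi_pos.le
  -- rewrite the integrand a.e.
  have key : (∫⁻ ω, ENNReal.ofReal
        (Real.pi * ∑' k : ℕ+, (A k ω) ^ 2 * (j0 k) ^ (-2 - 2 * s) +
          2 * Real.pi * ∑' p : ℕ+ × ℕ+,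
            ‖Z p ω + W p.1 ω / Real.sqrt ((p.1 : ℕ) : ℝ)‖ ^ 2 * (j p) ^ (-2 - 2 * s)))
      = ∫⁻ ω, (ENNReal.ofReal Real.pi *
          (∑' k : ℕ+, ENNReal.ofReal ((A k ω) ^ 2 * (j0 k) ^ (-2 - 2 * s)))
        + ENNReal.ofReal (2 * Real.pi) * (∑' p : ℕ+ × ℕ+, ENNReal.ofReal
          (‖Z p ω + W p.1 ω / Real.sqrt ((p.1 : ℕ) : ℝ)‖ ^ 2 * (j p) ^ (-2 - 2 * s)))) := by
    refine lintegral_congr_ae ?_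
    filter_upwards [ae1, ae2] with ω h1 h2
    have hT1 : 0 ≤ ∑' k : ℕ+, (A k ω) ^ 2 * (j0 k) ^ (-2 - 2 * s) :=
      tsum_nonneg fun k => mul_nonneg (sq_nonneg _) (hc0 k)
    have hT2 : 0 ≤ ∑' p : ℕ+ × ℕ+,
        ‖Z p ω + W p.1 ω / Real.sqrt ((p.1 : ℕ) : ℝ)‖ ^ 2 * (j p) ^ (-2 - 2 * s) :=
      tsum_nonneg fun p => mul_nonneg (sq_nonneg _) (hc p)
    rw [ENNReal.ofReal_add (by positivity) (by positivity),
      ENNReal.ofReal_mul hπ0, ENNReal.ofReal_mul (by positivity), h1, h2]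
  rw [key, lintegral_add_left (hG1meas.const_mul _),
    lintegral_const_mul _ hG1meas, lintegral_const_mul _ hG2meas, int1, int2]
  have hS1 : 0 ≤ ∑' k : ℕ+, (1:ℝ) * (j0 k) ^ (-2 - 2 * s) :=
    tsum_nonneg fun k => mul_nonneg zero_le_one (hc0 k)
  have hS2 : 0 ≤ ∑' p : ℕ+ × ℕ+, (1 + 1 / ((p.1 : ℕ) : ℝ)) * (j p) ^ (-2 - 2 * s) :=
    tsum_nonneg fun p => mul_nonneg (hvpos p).le (hc p)
  rw [← ENNReal.ofReal_mul hπ0, ← ENNReal.ofReal_mul (by positivity),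
    ← ENNReal.ofReal_add (by positivity) (by positivity)]
  simp only [one_mul]
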